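/- Let E be the exterior algebra over ℂ on generators e₁,…,e₆ and let T = {{1,2,3},{3,4,5},{1,4,6},{2,5,6}} (the triangles of the signed graph G∘). Then the span of the 12 elements e_t ∧ ∂e_S for S ∈ T and t ∈ [6]∖S has dimension 10 inside E³. -/
import Mathlib


open ExteriorAlgebra

/-- The standard generator `e i` of the exterior algebra `Λ(ℂ⁶)`. -/
noncomputable def gen (i : Fin 6) : ExteriorAlgebra ℂ (Fin 6 → ℂ) :=
  ι ℂ (Pi.single i (1 : ℂ))

/-- `∂e_{ijk} = e_j ∧ e_k - e_i ∧ e_k + e_i ∧ e_j`. -/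
noncomputable def bdry (i j k : Fin 6) : ExteriorAlgebra ℂ (Fin 6 → ℂ) :=
  gen j * gen k - gen i * gen k + gen i * gen j

/-- The triangles of the signed graph `G∘` (edges 1,…,6 relabelled 0,…,5):
`{1,2,3}, {3,4,5}, {1,4,6}, {2,5,6}`. -/
def triangles : List (Fin 6 × Fin 6 × Fin 6) := [(0, 1, 2), (2, 3, 4), (0, 3, 5), (1, 4, 5)]

/-! ### Auxiliary machinery -/

/-- The linear functional on the exterior algebra extracting (up to sign) the coefficient of a
degree-3 monomial, built from the `3×3` minor determinant. -/
noncomputable def coeff (s : Fin 3 → Fin 6) :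
    ExteriorAlgebra ℂ (Fin 6 → ℂ) →ₗ[ℂ] ℂ :=
  liftAlternating fun n =>
    match n with
    | 3 => Matrix.detRowAlternating.compLinearMap (LinearMap.funLeft ℂ ℂ s)
    | _ => 0

lemma triple_eq_iotaMulti (a b c : Fin 6) :
    gen a * gen b * gen c =
      ιMulti ℂ 3 ![Pi.single a 1, Pi.single b 1, Pi.single c 1] := by
  simp [gen, ιMulti_apply, List.ofFn_succ, mul_assoc]

lemma coeff_mono (s : Fin 3 → Fin 6) (a b c : Fin 6) :
    coeff s (gen a * gen b * gen c) =
      Matrix.det (Matrix.of fun r q =>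
        (![(Pi.single a 1 : Fin 6 → ℂ), Pi.single b 1, Pi.single c 1] r) (s q)) := by
  rw [triple_eq_iotaMulti, coeff, liftAlternating_apply_ιMulti]
  rfl

lemma gen_sq (i : Fin 6) : gen i * gen i = 0 := ι_sq_zero _

lemma gen_sq' (i : Fin 6) (x : ExteriorAlgebra ℂ (Fin 6 → ℂ)) :
    gen i * (gen i * x) = 0 := by rw [← mul_assoc, gen_sq, zero_mul]

lemma gen_swap (i j : Fin 6) : gen j * gen i = -(gen i * gen j) := by
  have h : gen i * gen j + gen j * gen i = 0 := ι_add_mul_swap _ _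
  rw [eq_neg_iff_add_eq_zero, add_comm]
  exact h

lemma gen_swap' (i j : Fin 6) (x : ExteriorAlgebra ℂ (Fin 6 → ℂ)) :
    gen j * (gen i * x) = -(gen i * (gen j * x)) := by
  rw [← mul_assoc, gen_swap, neg_mul, mul_assoc]

/-- Ten of the twelve spanning elements, which form a basis of the span. -/
noncomputable def vfam : Fin 10 → ExteriorAlgebra ℂ (Fin 6 → ℂ) :=
  ![gen 3 * bdry 0 1 2, gen 4 * bdry 0 1 2, gen 5 * bdry 0 1 2, gen 0 * bdry 2 3 4, gen 1 * bdry 2 3 4, gen 5 * bdry 2 3 4, gen 1 * bdry 0 3 5, gen 2 * bdry 0 3 5, gen 4 * bdry 0 3 5, gen 0 * bdry 1 4 5]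

lemma dep_a :
    gen 2 * bdry 1 4 5 =
      -(gen 4 * bdry 0 1 2) + gen 5 * bdry 0 1 2 + gen 0 * bdry 2 3 4
      - gen 5 * bdry 2 3 4 + gen 2 * bdry 0 3 5 - gen 4 * bdry 0 3 5
      + gen 0 * bdry 1 4 5 := by
  simp only [bdry, mul_sub, mul_add, neg_sub, neg_add, neg_neg, mul_neg,
    gen_swap 0 1, gen_swap 0 2, gen_swap 0 3, gen_swap 0 4, gen_swap 0 5, gen_swap 1 2, gen_swap 1 3, gen_swap 1 4, gen_swap 1 5, gen_swap 2 3, gen_swap 2 4, gen_swap 2 5, gen_swap 3 4, gen_swap 3 5, gen_swap 4 5, gen_swap' 0 1, gen_swap' 0 2, gen_swap' 0 3, gen_swap' 0 4, gen_swap' 0 5, gen_swap' 1 2, gen_swap' 1 3, gen_swap' 1 4, gen_swap' 1 5, gen_swap' 2 3, gen_swap' 2 4, gen_swap' 2 5, gen_swap' 3 4, gen_swap' 3 5, gen_swap' 4 5,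
    gen_sq, gen_sq', mul_zero, neg_zero]
  abel

lemma dep_b :
    gen 3 * bdry 1 4 5 =
      gen 3 * bdry 0 1 2 - gen 4 * bdry 0 1 2 + gen 0 * bdry 2 3 4
      - gen 1 * bdry 2 3 4 + gen 1 * bdry 0 3 5 - gen 4 * bdry 0 3 5
      + gen 0 * bdry 1 4 5 := by
  simp only [bdry, mul_sub, mul_add, neg_sub, neg_add, neg_neg, mul_neg,
    gen_swap 0 1, gen_swap 0 2, gen_swap 0 3, gen_swap 0 4, gen_swap 0 5, gen_swap 1 2, gen_swap 1 3, gen_swap 1 4, gen_swap 1 5, gen_swap 2 3, gen_swap 2 4, gen_swap 2 5, gen_swap 3 4, gen_swap 3 5, gen_swap 4 5, gen_swap' 0 1, gen_swap' 0 2, gen_swap' 0 3, gen_swap' 0 4, gen_swap' 0 5, gen_swap' 1 2, gen_swap' 1 3, gen_swap' 1 4, gen_swap' 1 5, gen_swap' 2 3, gen_swap' 2 4, gen_swap' 2 5, gen_swap' 3 4, gen_swap' 3 5, gen_swap' 4 5,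
    gen_sq, gen_sq', mul_zero, neg_zero]
  abel

lemma sum_univ_ten {M : Type*} [AddCommMonoid M] (f : Fin 10 → M) :
    ∑ i, f i = f 0 + f 1 + f 2 + f 3 + f 4 + f 5 + f 6 + f 7 + f 8 + f 9 := by
  simp [Fin.sum_univ_succ, Fin.succ]
  abel

lemma vfam_0 : vfam 0 = gen 3 * bdry 0 1 2 := rfl
lemma vfam_1 : vfam 1 = gen 4 * bdry 0 1 2 := rfl
lemma vfam_2 : vfam 2 = gen 5 * bdry 0 1 2 := rfl
lemma vfam_3 : vfam 3 = gen 0 * bdry 2 3 4 := rfl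
lemma vfam_4 : vfam 4 = gen 1 * bdry 2 3 4 := rfl
lemma vfam_5 : vfam 5 = gen 5 * bdry 2 3 4 := rfl
lemma vfam_6 : vfam 6 = gen 1 * bdry 0 3 5 := rfl
lemma vfam_7 : vfam 7 = gen 2 * bdry 0 3 5 := rfl
lemma vfam_8 : vfam 8 = gen 4 * bdry 0 3 5 := rfl
lemma vfam_9 : vfam 9 = gen 0 * bdry 1 4 5 := rfl

set_option maxHeartbeats 4000000 in
lemma vfam_indep : LinearIndependent ℂ vfam := by
  rw [Fintype.linearIndependent_iff]
  intro g hg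
  rw [sum_univ_ten] at hg
  rw [vfam_0, vfam_1, vfam_2, vfam_3, vfam_4, vfam_5, vfam_6, vfam_7, vfam_8, vfam_9] at hg
  have h1 := congrArg (coeff ![0, 1, 3]) hg
  have h2 := congrArg (coeff ![0, 1, 4]) hg
  have h3 := congrArg (coeff ![0, 1, 5]) hg
  have h4 := congrArg (coeff ![0, 2, 3]) hg
  have h5 := congrArg (coeff ![0, 3, 4]) hg
  have h6 := congrArg (coeff ![1, 2, 5]) hg
  have h7 := congrArg (coeff ![1, 3, 4]) hg
  have h8 := congrArg (coeff ![1, 3, 5]) hg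
  have h9 := congrArg (coeff ![2, 3, 5]) hg
  have h10 := congrArg (coeff ![2, 4, 5]) hg
  simp only [map_add, map_smul, map_zero, smul_eq_mul, bdry, mul_sub, mul_add,
    ← mul_assoc, map_sub, coeff_mono] at h1 h2 h3 h4 h5 h6 h7 h8 h9 h10
  simp (config := { decide := true }) [Matrix.det_fin_three, Pi.single_apply,
    Matrix.vecHead, Matrix.vecTail] at h1 h2 h3 h4 h5 h6 h7 h8 h9 h10
  have e0 : g 0 = 0 := by linear_combination h1 + h8
  have e1 : g 1 = 0 := by linear_combination h2 + h3 - h6 - h8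
  have e2 : g 2 = 0 := by linear_combination h6
  have e3 : g 3 = 0 := by linear_combination h1 + h4 + h8 + h9 - h10
  have e4 : g 4 = 0 := by linear_combination h7
  have e5 : g 5 = 0 := by linear_combination h10
  have e6 : g 6 = 0 := by linear_combination h8
  have e7 : g 7 = 0 := by linear_combination h9 - h10
  have e8 : g 8 = 0 := by linear_combination -h1 - h4 + h5 - h8 - h9 + h10
  have e9 : g 9 = 0 := by linear_combination -h3 + h6 + h8
  intro i
  fin_cases i <;> assumption


lemma mem_vfam (i : Fin 10) : vfam i ∈ Submodule.span ℂ (Set.range vfam) :=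
  Submodule.subset_span ⟨i, rfl⟩

lemma mem_a : gen 2 * bdry 1 4 5 ∈ Submodule.span ℂ (Set.range vfam) := by
  rw [dep_a, ← vfam_1, ← vfam_2, ← vfam_3, ← vfam_5, ← vfam_7, ← vfam_8, ← vfam_9]
  exact Submodule.add_mem _ (Submodule.sub_mem _ (Submodule.add_mem _ (Submodule.sub_mem _
    (Submodule.add_mem _ (Submodule.add_mem _ (Submodule.neg_mem _ (mem_vfam 1)) (mem_vfam 2))
      (mem_vfam 3)) (mem_vfam 5)) (mem_vfam 7)) (mem_vfam 8)) (mem_vfam 9)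

lemma mem_b : gen 3 * bdry 1 4 5 ∈ Submodule.span ℂ (Set.range vfam) := by
  rw [dep_b, ← vfam_0, ← vfam_1, ← vfam_3, ← vfam_4, ← vfam_6, ← vfam_8, ← vfam_9]
  exact Submodule.add_mem _ (Submodule.sub_mem _ (Submodule.add_mem _ (Submodule.sub_mem _
    (Submodule.add_mem _ (Submodule.sub_mem _ (mem_vfam 0) (mem_vfam 1)) (mem_vfam 3))
      (mem_vfam 4)) (mem_vfam 6)) (mem_vfam 8)) (mem_vfam 9)

/-- For the signed graph `G∘`, the span of the 12 elements `e_t ∧ ∂e_S`, for `S` a triangle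
of `G∘` and `t ∉ S`, has dimension `10` inside `E³`. -/
theorem dim_span_F3_Gcirc :
    Module.finrank ℂ (Submodule.span ℂ
      {x : ExteriorAlgebra ℂ (Fin 6 → ℂ) |
        ∃ p ∈ triangles, ∃ t : Fin 6, t ∉ ({p.1, p.2.1, p.2.2} : Finset (Fin 6)) ∧
          x = gen t * bdry p.1 p.2.1 p.2.2}) = 10 := by
  have hspan : Submodule.span ℂ
      {x : ExteriorAlgebra ℂ (Fin 6 → ℂ) |
        ∃ p ∈ triangles, ∃ t : Fin 6, t ∉ ({p.1, p.2.1, p.2.2} : Finset (Fin 6)) ∧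
          x = gen t * bdry p.1 p.2.1 p.2.2} = Submodule.span ℂ (Set.range vfam) := by
    apply le_antisymm
    · rw [Submodule.span_le]
      rintro x ⟨p, hp, t, ht, rfl⟩
      simp only [triangles, List.mem_cons, List.not_mem_nil, or_false] at hp
      rcases hp with rfl | rfl | rfl | rfl
      · fin_cases t
        · exact absurd (by decide) ht
        · exact absurd (by decide) ht
        · exact absurd (by decide) ht
        · exact mem_vfam 0
        · exact mem_vfam 1
        · exact mem_vfam 2
      · fin_cases t
        · exact mem_vfam 3
        · exact mem_vfam 4
        · exact absurd (by decide) ht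
        · exact absurd (by decide) ht
        · exact absurd (by decide) ht
        · exact mem_vfam 5
      · fin_cases t
        · exact absurd (by decide) ht
        · exact mem_vfam 6
        · exact mem_vfam 7
        · exact absurd (by decide) ht
        · exact mem_vfam 8
        · exact absurd (by decide) ht
      · fin_cases t
        · exact mem_vfam 9
        · exact absurd (by decide) ht
        · exact mem_a
        · exact mem_b
        · exact absurd (by decide) ht
        · exact absurd (by decide) ht
    · rw [Submodule.span_le]
      rintro x ⟨i, rfl⟩
      apply Submodule.subset_span
      fin_cases i
      · exact ⟨(0, 1, 2), by simp [triangles], 3, by decide, rfl⟩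
      · exact ⟨(0, 1, 2), by simp [triangles], 4, by decide, rfl⟩
      · exact ⟨(0, 1, 2), by simp [triangles], 5, by decide, rfl⟩
      · exact ⟨(2, 3, 4), by simp [triangles], 0, by decide, rfl⟩
      · exact ⟨(2, 3, 4), by simp [triangles], 1, by decide, rfl⟩
      · exact ⟨(2, 3, 4), by simp [triangles], 5, by decide, rfl⟩
      · exact ⟨(0, 3, 5), by simp [triangles], 1, by decide, rfl⟩
      · exact ⟨(0, 3, 5), by simp [triangles], 2, by decide, rfl⟩
      · exact ⟨(0, 3, 5), by simp [triangles], 4, by decide, rfl⟩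
      · exact ⟨(1, 4, 5), by simp [triangles], 0, by decide, rfl⟩
  rw [hspan, finrank_span_eq_card vfam_indep]
  simp
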